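/- Let h₀ ∈ (0,1). With V₀, D₀, p₀, ρ₀, T₀ as in the context, the pushforward measure Measure.map T₀ ρ₀ equals volume.withDensity p₁, where p₁(x) = D₀⁻¹·exp(-x²/2) for |x| < 1 and p₁(x) = D₀⁻¹·(1-h₀)⁻¹·exp(-(|x| - h₀)/(1 - h₀) + 1/2) for |x| ≥ 1. -/

import Mathlib

open MeasureTheory Set

/-- The initial potential: `V₀ x = x²/2` for `|x| < 1` and `|x| - 1/2` otherwise. -/
noncomputable def V₀ (x : ℝ) : ℝ := if |x| < 1 then x ^ 2 / 2 else |x| - 1 / 2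

/-- The normalization constant `D₀ = ∫_{-1}^{1} exp(-x²/2) dx + 2 exp(-1/2)`. -/
noncomputable def D₀ : ℝ := (∫ x in (-1 : ℝ)..1, Real.exp (-x ^ 2 / 2)) + 2 * Real.exp (-1 / 2)

/-- The initial density `p₀ = D₀⁻¹ exp(-V₀)`. -/
noncomputable def p₀ (x : ℝ) : ENNReal := ENNReal.ofReal (D₀⁻¹ * Real.exp (-V₀ x))

/-- The initial measure `ρ₀ = p₀ · Lebesgue`. -/
noncomputable def ρ₀ : Measure ℝ := volume.withDensity p₀

/-- The one-step forward-Euler pushforward map for the Wasserstein gradient flow of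
`ρ ↦ KL(ρ | standard Gaussian)` started at `ρ₀`, with step size `h₀`. -/
noncomputable def T₀ (h₀ : ℝ) (x : ℝ) : ℝ :=
  if |x| < 1 then x else if 1 ≤ x then (1 - h₀) * x + h₀ else (1 - h₀) * x - h₀

noncomputable def affE (a b : ℝ) (ha : a ≠ 0) : ℝ ≃ᵐ ℝ :=
  ((Homeomorph.mulLeft₀ a ha).trans (Homeomorph.addRight b)).toMeasurableEquiv

lemma map_equiv_withDensity (e : ℝ ≃ᵐ ℝ) (μ : Measure ℝ) (f : ℝ → ENNReal) (hf : Measurable f) :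
    Measure.map e (μ.withDensity f) = (Measure.map e μ).withDensity (fun y => f (e.symm y)) := by
  ext s hs
  rw [Measure.map_apply e.measurable hs, withDensity_apply _ (e.measurable hs),
    withDensity_apply _ hs,
    setLIntegral_map (f := fun y => f (e.symm y)) hs (hf.comp e.symm.measurable) e.measurable]
  refine setLIntegral_congr_fun (e.measurable hs) (fun x _ => ?_)
  simp

lemma map_affine_volume (a b : ℝ) (ha : a ≠ 0) :
    Measure.map (fun x : ℝ => a * x + b) volume = ENNReal.ofReal |a⁻¹| • volume := by
  have h : (fun x : ℝ => a * x + b) = (fun y => y + b) ∘ (fun x => a * x) := rfl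
  rw [h, ← Measure.map_map (measurable_add_const b) (measurable_const_mul a),
    Real.map_volume_mul_left ha, Measure.map_smul, map_add_right_eq_self]

lemma map_affine_withDensity (a b : ℝ) (ha : a ≠ 0) (f : ℝ → ENNReal) (hf : Measurable f) :
    Measure.map (fun x : ℝ => a * x + b) (volume.withDensity f) =
      volume.withDensity (fun y => ENNReal.ofReal |a⁻¹| * f (a⁻¹ * (y - b))) := by
  have h1 : Measure.map (fun x : ℝ => a * x + b) (volume.withDensity f)
      = Measure.map (affE a b ha) (volume.withDensity f) := rfl
  rw [h1, map_equiv_withDensity _ _ _ hf]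
  have h2 : Measure.map (⇑(affE a b ha)) volume = Measure.map (fun x : ℝ => a * x + b) volume :=
    rfl
  rw [h2, map_affine_volume a b ha, withDensity_smul_measure,
    ← withDensity_smul _ (show Measurable fun y => f ((affE a b ha).symm y) from
      hf.comp (affE a b ha).symm.measurable)]
  rfl

lemma measurable_V₀ : Measurable V₀ := by
  unfold V₀
  exact Measurable.ite (measurableSet_lt (measurable_id.abs) measurable_const)
    (by fun_prop) ((measurable_id.abs).sub measurable_const)

lemma measurable_p₀ : Measurable p₀ := by
  unfold p₀
  exact ((measurable_const.mul (measurable_V₀.neg.exp))).ennreal_ofReal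

lemma measurable_T₀ (h₀ : ℝ) : Measurable (T₀ h₀) := by
  unfold T₀
  exact Measurable.ite (measurableSet_lt (measurable_id.abs) measurable_const) measurable_id
    (Measurable.ite (measurableSet_le measurable_const measurable_id) (by fun_prop) (by fun_prop))

theorem forwardEuler_step_density
    (h₀ : ℝ) (hh0 : 0 < h₀) (hh1 : h₀ < 1) :
    Measure.map (T₀ h₀) ρ₀ =
      volume.withDensity (fun x =>
        if |x| < 1 then ENNReal.ofReal (D₀⁻¹ * Real.exp (-x ^ 2 / 2))
        else ENNReal.ofReal
          (D₀⁻¹ * (1 - h₀)⁻¹ * Real.exp (-((|x| - h₀) / (1 - h₀)) + 1 / 2))) := by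
  set a : ℝ := 1 - h₀ with ha_def
  have ha0 : 0 < a := by simp [ha_def]; linarith
  have ha : a ≠ 0 := ne_of_gt ha0
  set A : Set ℝ := {x | |x| < 1} with hA_def
  set B : Set ℝ := {x | 1 ≤ x} with hB_def
  set C : Set ℝ := {x | x ≤ -1} with hC_def
  have hA : MeasurableSet A := measurableSet_lt (measurable_id.abs) measurable_const
  have hB : MeasurableSet B := measurableSet_le measurable_const measurable_id
  have hC : MeasurableSet C := measurableSet_le measurable_id measurable_const
  -- decompose the density
  have hp : p₀ = A.indicator p₀ + B.indicator p₀ + C.indicator p₀ := by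
    funext x
    by_cases h1 : |x| < 1
    · have h1' := abs_lt.mp h1
      have hxB : x ∉ B := by simp only [hB_def, mem_setOf_eq]; linarith [h1'.2]
      have hxC : x ∉ C := by simp only [hC_def, mem_setOf_eq]; linarith [h1'.1]
      simp [indicator_of_mem (show x ∈ A from h1), indicator_of_notMem hxB,
        indicator_of_notMem hxC]
    · have h1' : 1 ≤ |x| := le_of_not_gt h1
      rcases le_or_gt 1 x with hx | hx
      · have hxC : x ∉ C := by simp only [hC_def, mem_setOf_eq]; push_neg; linarith
        simp [indicator_of_notMem (show x ∉ A from h1), indicator_of_mem (show x ∈ B from hx),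
          indicator_of_notMem hxC]
      · have hxC : x ∈ C := by
          simp only [hC_def, mem_setOf_eq]
          rcases abs_cases x with ⟨he, _⟩ | ⟨he, _⟩
          · linarith [h1', he]
          · linarith [h1', he]
        have hxB : x ∉ B := by simp only [hB_def, mem_setOf_eq]; push_neg; exact hx
        simp [indicator_of_notMem (show x ∉ A from h1), indicator_of_notMem hxB,
          indicator_of_mem hxC]
  have hmA : Measurable (A.indicator p₀) := measurable_p₀.indicator hA
  have hmB : Measurable (B.indicator p₀) := measurable_p₀.indicator hB
  have hmC : Measurable (C.indicator p₀) := measurable_p₀.indicator hC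
  have hρ : ρ₀ = volume.withDensity (A.indicator p₀) + volume.withDensity (B.indicator p₀)
      + volume.withDensity (C.indicator p₀) := by
    rw [ρ₀]
    conv_lhs => rw [hp]
    rw [withDensity_add_left (show Measurable (A.indicator p₀ + B.indicator p₀) from hmA.add hmB),
      withDensity_add_left hmA]
  -- null sets of the pieces
  have hnull : ∀ (s : Set ℝ), MeasurableSet s →
      (volume.withDensity (s.indicator p₀)) sᶜ = 0 := by
    intro s hs
    rw [withDensity_apply _ hs.compl]
    rw [setLIntegral_congr_fun hs.compl
      (fun x hx => indicator_of_notMem hx p₀)]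
    simp
  have hcongr : ∀ (s : Set ℝ), MeasurableSet s → ∀ (g : ℝ → ℝ),
      (∀ x ∈ s, T₀ h₀ x = g x) →
      Measure.map (T₀ h₀) (volume.withDensity (s.indicator p₀))
        = Measure.map g (volume.withDensity (s.indicator p₀)) := by
    intro s hs g hg
    refine Measure.map_congr ?_
    rw [Filter.EventuallyEq, ae_iff]
    refine measure_mono_null (fun x hx => ?_) (hnull s hs)
    simp only [mem_setOf_eq] at hx
    intro hxs
    exact hx (hg x hxs)
  -- the three mapped pieces
  have hmapA : Measure.map (T₀ h₀) (volume.withDensity (A.indicator p₀))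
      = volume.withDensity (A.indicator p₀) := by
    rw [hcongr A hA id fun x hx => if_pos hx, Measure.map_id]
  have hmapB : Measure.map (T₀ h₀) (volume.withDensity (B.indicator p₀))
      = volume.withDensity (fun y => ENNReal.ofReal |a⁻¹| * (B.indicator p₀) (a⁻¹ * (y - h₀))) := by
    rw [hcongr B hB (fun x => a * x + h₀) ?_, map_affine_withDensity a h₀ ha _ hmB]
    intro x hx
    have hx1 : (1:ℝ) ≤ x := hx
    have : ¬ |x| < 1 := by rw [abs_of_pos (by linarith)]; push_neg; exact hx1
    simp [T₀, this, hx1, ha_def]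
  have hmapC : Measure.map (T₀ h₀) (volume.withDensity (C.indicator p₀))
      = volume.withDensity
        (fun y => ENNReal.ofReal |a⁻¹| * (C.indicator p₀) (a⁻¹ * (y - (-h₀)))) := by
    rw [hcongr C hC (fun x => a * x + (-h₀)) ?_, map_affine_withDensity a (-h₀) ha _ hmC]
    intro x hx
    have hx1 : x ≤ (-1:ℝ) := hx
    have h2 : ¬ |x| < 1 := by rw [abs_of_neg (by linarith)]; push_neg; linarith
    have h3 : ¬ (1:ℝ) ≤ x := by push_neg; linarith
    simp only [T₀, if_neg h2, if_neg h3, ha_def]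
    ring
  -- assemble
  have hmB' : Measurable (fun y : ℝ => ENNReal.ofReal |a⁻¹| * (B.indicator p₀) (a⁻¹ * (y - h₀))) :=
    (hmB.comp ((measurable_id.sub measurable_const).const_mul a⁻¹)).const_mul _
  rw [hρ, Measure.map_add _ _ (measurable_T₀ h₀), Measure.map_add _ _ (measurable_T₀ h₀),
    hmapA, hmapB, hmapC,
    ← withDensity_add_left hmA,
    ← withDensity_add_left
      (show Measurable ((A.indicator p₀ + fun y => ENNReal.ofReal |a⁻¹| *
          (B.indicator p₀) (a⁻¹ * (y - h₀)))) from hmA.add hmB')]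
  congr 1
  funext x
  simp only [Pi.add_apply]
  have habs : |a⁻¹| = a⁻¹ := abs_of_pos (inv_pos.mpr ha0)
  by_cases h1 : |x| < 1
  · have h1' := abs_lt.mp h1
    have hxB : a⁻¹ * (x - h₀) ∉ B := by
      simp only [hB_def, mem_setOf_eq]
      push_neg
      rw [inv_mul_lt_iff₀ ha0] -- goal a⁻¹ * (x - h₀) < 1 ↔ x - h₀ < a * 1?
      linarith [h1'.2]
    have hxC : a⁻¹ * (x - (-h₀)) ∉ C := by
      simp only [hC_def, mem_setOf_eq]
      push_neg
      rw [lt_inv_mul_iff₀ ha0]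
      linarith [h1'.1]
    rw [indicator_of_mem (show x ∈ A from h1) p₀, indicator_of_notMem hxB,
      indicator_of_notMem hxC, if_pos h1]
    simp only [mul_zero, add_zero, p₀, V₀, if_pos h1]
    ring_nf
  · rw [if_neg h1]
    have h1' : 1 ≤ |x| := le_of_not_gt h1
    rcases le_or_gt 1 x with hx | hx
    · -- x ≥ 1
      have hxA : x ∉ A := h1
      have hxB : a⁻¹ * (x - h₀) ∈ B := by
        simp only [hB_def, mem_setOf_eq]
        rw [le_inv_mul_iff₀ ha0]
        linarith
      have hxC : a⁻¹ * (x - (-h₀)) ∉ C := by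
        simp only [hC_def, mem_setOf_eq]
        push_neg
        have := mul_pos (inv_pos.mpr ha0) (show (0:ℝ) < x - -h₀ by linarith)
        linarith
      have hx'1 : (1:ℝ) ≤ a⁻¹ * (x - h₀) := hxB
      have hx'abs : ¬ |a⁻¹ * (x - h₀)| < 1 := by
        rw [abs_of_pos (by linarith)]; push_neg; exact hx'1
      rw [indicator_of_notMem hxA, indicator_of_mem hxB, indicator_of_notMem hxC]
      simp only [p₀, V₀, if_neg hx'abs, mul_zero, add_zero, zero_add,
        abs_of_pos (show (0:ℝ) < a⁻¹ * (x - h₀) by linarith), habs]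
      rw [← ENNReal.ofReal_mul (le_of_lt (inv_pos.mpr ha0))]
      congr 1
      rw [abs_of_pos (show (0:ℝ) < x by linarith)]
      rw [if_neg (not_lt.mpr hx'1)]
      have hexp : -(a⁻¹ * (x - h₀) - 1 / 2) = -((x - h₀) / a) + 1 / 2 := by
        rw [div_eq_inv_mul]; ring
      rw [hexp]; ring
    · -- x ≤ -1
      have hxneg : x ≤ -1 := by
        rcases abs_cases x with ⟨he, _⟩ | ⟨he, _⟩
        · linarith
        · linarith
      have hxA : x ∉ A := h1
      have hxB : a⁻¹ * (x - h₀) ∉ B := by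
        simp only [hB_def, mem_setOf_eq]
        push_neg
        rw [inv_mul_lt_iff₀ ha0]
        linarith
      have hxC : a⁻¹ * (x - (-h₀)) ∈ C := by
        simp only [hC_def, mem_setOf_eq]
        rw [inv_mul_le_iff₀ ha0]
        linarith
      have hx'1 : a⁻¹ * (x - (-h₀)) ≤ (-1:ℝ) := hxC
      have hx'abs : ¬ |a⁻¹ * (x - (-h₀))| < 1 := by
        rw [abs_of_neg (by linarith)]; push_neg; linarith
      rw [indicator_of_notMem hxA, indicator_of_notMem hxB, indicator_of_mem hxC]
      simp only [p₀, V₀, if_neg hx'abs, mul_zero, add_zero, zero_add, habs]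
      rw [← ENNReal.ofReal_mul (le_of_lt (inv_pos.mpr ha0))]
      congr 1
      rw [abs_of_neg (show a⁻¹ * (x - (-h₀)) < 0 by linarith),
        abs_of_neg (show x < 0 by linarith)]
      have hexp : -(-(a⁻¹ * (x - (-h₀))) - 1 / 2) = -((-x - h₀) / a) + 1 / 2 := by
        rw [div_eq_inv_mul]; ring
      rw [hexp]; ring
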